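/- Fix ε ∈ (0,1/2) and let M(x,ε) = H(min(1/2, H⁻¹(x) + ε)). Then there exists d > 0 such that M(x,ε) ≥ d + (1−d)·x for all x ∈ [0,1]. -/

import Mathlib

/-- The binary entropy function (base-2 logarithms). -/
noncomputable def binH (p : ℝ) : ℝ := -(p * Real.logb 2 p + (1 - p) * Real.logb 2 (1 - p))

lemma binH_eq (p : ℝ) : binH p = Real.binEntropy p / Real.log 2 := by
  rcases eq_or_ne p 0 with rfl | hp0
  · simp [binH, Real.binEntropy]
  rcases eq_or_ne p 1 with rfl | hp1
  · simp [binH, Real.binEntropy]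
  have h1 : (1 : ℝ) - p ≠ 0 := by intro h; apply hp1; linarith
  simp only [binH, Real.binEntropy, Real.logb, Real.log_inv]
  field_simp
  ring

lemma diff_antitone {ε : ℝ} (hε0 : 0 < ε) (hε2 : ε < 1/2) :
    AntitoneOn (fun p => Real.binEntropy (p + ε) - Real.binEntropy p)
      (Set.Icc 0 (1/2 - ε)) := by
  have hc : (0:ℝ) < 1/2 - ε := by linarith
  apply StrictAntiOn.antitoneOn
  apply strictAntiOn_of_deriv_neg (convex_Icc _ _)
  · fun_prop
  · intro p hp
    rw [interior_Icc] at hp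
    obtain ⟨hp0, hpc⟩ := hp
    have hp1 : p < 1 := by linarith
    have hpe0 : 0 < p + ε := by linarith
    have hpe1 : p + ε < 1 := by linarith
    have hd1 : HasDerivAt (fun q : ℝ => Real.binEntropy (q + ε))
        (Real.log (1 - (p + ε)) - Real.log (p + ε)) p := by
      have := (Real.hasDerivAt_binEntropy hpe0.ne' hpe1.ne).comp p
        ((hasDerivAt_id p).add_const ε)
      rw [mul_one] at this
      exact this
    have hd2 : HasDerivAt Real.binEntropy (Real.log (1 - p) - Real.log p) p :=
      Real.hasDerivAt_binEntropy hp0.ne' hp1.ne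
    have hD : HasDerivAt (fun p => Real.binEntropy (p + ε) - Real.binEntropy p)
        ((Real.log (1 - (p + ε)) - Real.log (p + ε)) - (Real.log (1 - p) - Real.log p)) p :=
      hd1.sub hd2
    rw [hD.deriv]
    have h1 : (0:ℝ) < (1 - (p + ε)) * p := by nlinarith
    have h2 : (1 - (p + ε)) * p < (1 - p) * (p + ε) := by nlinarith
    have := Real.log_lt_log h1 h2
    rw [Real.log_mul (by nlinarith) hp0.ne',
        Real.log_mul (by nlinarith) hpe0.ne'] at this
    linarith

theorem stmt17 (g : ℝ → ℝ)
    (hg_left : ∀ p ∈ Set.Icc (0:ℝ) (1/2), g (binH p) = p)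
    (hg_right : ∀ x ∈ Set.Icc (0:ℝ) 1, binH (g x) = x ∧ g x ∈ Set.Icc (0:ℝ) (1/2))
    (ε : ℝ) (hε : ε ∈ Set.Ioo (0:ℝ) (1/2)) :
    ∃ d : ℝ, 0 < d ∧ ∀ x ∈ Set.Icc (0:ℝ) 1,
      d + (1 - d) * x ≤ binH (min (1/2) (g x + ε)) := by
  obtain ⟨hε0, hε2⟩ := hε
  have hlog2 : (0:ℝ) < Real.log 2 := Real.log_pos (by norm_num)
  set c : ℝ := 1/2 - ε with hc_def
  have hc0 : (0:ℝ) < c := by simp [hc_def]; linarith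
  set d : ℝ := 1 - binH c with hd_def
  have hbc_lt : Real.binEntropy c < Real.log 2 := by
    rw [Real.binEntropy_lt_log_two]
    intro h
    rw [hc_def] at h
    norm_num at h
    linarith
  have hbc_nonneg : 0 ≤ Real.binEntropy c :=
    Real.binEntropy_nonneg (le_of_lt hc0) (by simp [hc_def]; linarith)
  have hd0 : 0 < d := by
    rw [hd_def, binH_eq]
    rw [sub_pos, div_lt_one hlog2]
    exact hbc_lt
  have hd1 : d ≤ 1 := by
    rw [hd_def, binH_eq]
    have : 0 ≤ Real.binEntropy c / Real.log 2 := div_nonneg hbc_nonneg hlog2.le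
    linarith
  have hbe_half : Real.binEntropy (1/2) = Real.log 2 := by
    rw [show (1/2:ℝ) = 2⁻¹ by norm_num, Real.binEntropy_two_inv]
  have hbinH_half : binH (1/2) = 1 := by
    rw [binH_eq, hbe_half, div_self hlog2.ne']
  refine ⟨d, hd0, ?_⟩
  intro x hx
  obtain ⟨hx0, hx1⟩ := hx
  obtain ⟨hgx, hg0, hg2⟩ := hg_right x ⟨hx0, hx1⟩
  set p := g x
  rcases le_or_gt (p + ε) (1/2) with hcase | hcase
  · rw [min_eq_right hcase]
    have hpc : p ≤ c := by simp [hc_def]; linarith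
    have hmono := diff_antitone hε0 hε2 ⟨hg0, hpc⟩
      (Set.right_mem_Icc.mpr (by linarith)) hpc
    simp only at hmono
    have hce : c + ε = 1/2 := by simp [hc_def]
    rw [hce, hbe_half, ← hc_def] at hmono
    -- hmono : log 2 - binEntropy c ≤ binEntropy (p+ε) - binEntropy p
    have key : d + x ≤ binH (p + ε) := by
      have hx_eq : x = Real.binEntropy p / Real.log 2 := by rw [← hgx, binH_eq]
      rw [binH_eq, hd_def, binH_eq, hx_eq]
      have h2 : (Real.log 2 - Real.binEntropy c + Real.binEntropy p) / Real.log 2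
          ≤ Real.binEntropy (p + ε) / Real.log 2 := by
        gcongr
        linarith
      calc (1 - Real.binEntropy c / Real.log 2 + Real.binEntropy p / Real.log 2)
          = (Real.log 2 - Real.binEntropy c + Real.binEntropy p) / Real.log 2 := by
            field_simp
        _ ≤ _ := h2
    nlinarith
  · rw [min_eq_left hcase.le, hbinH_half]
    nlinarith
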